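/- Let R : 𝒳 → PMF(𝒴) be a local randomizer that is (ε,δ)-differentially private with ε > 2/3 and δ < (β / (8n·ln(n/β)))·e^{−6ε}, and let A be an analyzer such that the local protocol P = (R, A) is (α,β)-accurate for a function f : 𝒳^n → 𝒵 with respect to a distance function d : 𝒵 × 𝒵 → ℝ, where β ∈ (0,1). Then there exists a local randomizer R' : 𝒳 → PMF(𝒴) that is (8ε, 0)-differentially private and such that the local protocol P' = (R', A) is (α, 4β)-accurate for f with respect to d. -/

import Mathlib

open scoped ENNReal Classical

noncomputable section

namespace ShuffledDP

universe u v w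

lemma half_le_one : (2⁻¹ : ℝ≥0∞) ≤ 1 := by
  simp [ENNReal.inv_le_one]

/-- Independent samples from a finite family of PMFs, collected (in order) as a list. -/
noncomputable def indep {α : Type u} : (n : ℕ) → (Fin n → PMF α) → PMF (List α)
  | 0, _ => PMF.pure []
  | n + 1, f =>
      (f 0).bind fun y => (indep n fun i => f i.succ).bind fun ys => PMF.pure (y :: ys)

/-- `(ε, δ)`-differential privacy of a mechanism `M` with respect to a
neighboring relation `nbr` on inputs. -/
def DPFor {I : Type u} {Z : Type v} (nbr : I → I → Prop) (M : I → PMF Z) (ε δ : ℝ) : Prop :=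
  ∀ x x', nbr x x' → ∀ T : Set Z,
    (M x).toOuterMeasure T ≤
      ENNReal.ofReal (Real.exp ε) * (M x').toOuterMeasure T + ENNReal.ofReal δ

/-- Two datasets are neighbors if they differ in at most one coordinate. -/
def Neighbor {n : ℕ} {X : Type u} (x x' : Fin n → X) : Prop :=
  ∃ j, ∀ i, i ≠ j → x i = x' i

/-- The randomized-response local randomizer `R_{n,λ}`: output the input bit with
probability `1 - λ/n` and a uniformly random bit with probability `λ/n`. -/
noncomputable def rr (n : ℕ) (lam : ℝ) (x : Bool) : PMF Bool :=
  (PMF.bernoulli (min (Real.toNNReal (lam / n)) 1) (min_le_right _ _)).bind fun b =>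
    if b then PMF.bernoulli 2⁻¹ (by simpa using ENNReal.toNNReal_mono ENNReal.one_ne_top half_le_one) else PMF.pure x

/-- Binomial distribution, valued in `ℕ`. -/
noncomputable def binom (p : ℝ≥0∞) (h : p ≤ 1) (m : ℕ) : PMF ℕ :=
  (PMF.binomial p.toNNReal (by simpa using ENNReal.toNNReal_mono ENNReal.one_ne_top h) m).map Fin.val

/-- Uniform distribution over the subsets of `Fin n` of size `s`. -/
noncomputable def uniformSubset (n s : ℕ) : PMF (Finset (Fin n)) :=
  if h : ((Finset.univ : Finset (Fin n)).powersetCard s).Nonempty then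
    PMF.uniformOfFinset _ h
  else PMF.pure ∅

/-- `∑_{i ∉ H} x_i` for a boolean dataset `x`. -/
def sumOutside {n : ℕ} (H : Finset (Fin n)) (x : Fin n → Bool) : ℕ :=
  ∑ i ∈ Hᶜ, (if x i then 1 else 0)

/-- The mechanism `C_H`: output `∑_{i ∉ H} x_i + B` with `B ~ Bin(|H|, 1/2)`. -/
noncomputable def CH (n : ℕ) (H : Finset (Fin n)) (x : Fin n → Bool) : PMF ℕ :=
  (binom 2⁻¹ half_le_one H.card).map fun B => sumOutside H x + B

/-- The mechanism `C_s`: sample `H` uniformly among size-`s` subsets, then run `C_H`. -/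
noncomputable def Cs (n s : ℕ) (x : Fin n → Bool) : PMF ℕ :=
  (uniformSubset n s).bind fun H => CH n H x

/-- The mechanism `C_λ`: sample `s ~ Bin(n, λ/n)`, then run `C_s`. -/
noncomputable def Cmech (n : ℕ) (lam : ℝ) (x : Fin n → Bool) : PMF ℕ :=
  (binom (min (ENNReal.ofReal (lam / n)) 1) (min_le_right _ _) n).bind fun s => Cs n s x

/-- The shuffled bit-sum mechanism `Π_{n,λ}`: the random multiset `{y_1, …, y_n}`
of the outputs `y_i ~ R_{n,λ}(x_i)`. -/
noncomputable def shuffleBit (n : ℕ) (lam : ℝ) (x : Fin n → Bool) : PMF (Multiset Bool) :=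
  (indep n fun i => rr n lam (x i)).map fun l => (l : Multiset Bool)

/-- The bit-sum protocol output `P_{n,λ}(x) = (n/(n-λ)) (∑ y_i - λ/2)`. -/
noncomputable def bitSumOutput (n : ℕ) (lam : ℝ) (x : Fin n → Bool) : PMF ℝ :=
  (indep n fun i => rr n lam (x i)).map fun l =>
    ((n : ℝ) / (n - lam)) * ((l.count true : ℝ) - lam / 2)

/-- The randomized-rounding encoder `E_r`. -/
noncomputable def encoder (r : ℕ) (x : ℝ) : PMF (Fin r → Bool) :=
  (PMF.bernoulli (min (Real.toNNReal (x * r - ⌈x * r⌉ + 1)) 1) (min_le_right _ _)).map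
    fun b i => if ((i : ℕ) : ℤ) + 1 < ⌈x * r⌉ then true
      else if ((i : ℕ) : ℤ) + 1 = ⌈x * r⌉ then b else false

/-- The real-sum shuffled mechanism `Π^ℝ_{n,λ,r}`: the random multiset of all `n·r`
bits `y_{i,j} ~ R_{n,λ}(b_{i,j})` where `(b_{i,1},…,b_{i,r}) = E_r(x_i)`. -/
noncomputable def realShuffle (n : ℕ) (lam : ℝ) (r : ℕ) (X : Fin n → ℝ) :
    PMF (Multiset Bool) :=
  (indep n fun i =>
      (encoder r (X i)).bind fun b =>
        (indep r fun j => rr n lam (b j)).map fun l => (l : Multiset Bool)).map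
    fun ms => ms.sum

/-- The real-sum protocol output `z = (1/r)(n/(n-λ)) (∑_{i,j} y_{i,j} - λ r/2)`. -/
noncomputable def realOutput (n : ℕ) (lam : ℝ) (r : ℕ) (X : Fin n → ℝ) : PMF ℝ :=
  (realShuffle n lam r X).map fun m =>
    (1 / (r : ℝ)) * ((n : ℝ) / (n - lam)) * ((m.count true : ℝ) - lam * r / 2)

/-- The shuffled mechanism associated with a randomizer producing a multiset of
messages: the union (multiset sum) of the `n` users' message multisets. -/
noncomputable def shuffM {𝒳 : Type u} {𝒴 : Type v} (n : ℕ) (R : 𝒳 → PMF (Multiset 𝒴))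
    (x : Fin n → 𝒳) : PMF (Multiset 𝒴) :=
  (indep n fun i => R (x i)).map fun l => l.sum

/-- The multiset of the `m` messages output by an `m`-message randomizer. -/
noncomputable def vecR {𝒳 : Type u} {𝒴 : Type v} {m : ℕ} (R : 𝒳 → PMF (Fin m → 𝒴)) :
    𝒳 → PMF (Multiset 𝒴) :=
  fun a => (R a).map fun v => ((List.ofFn v : List 𝒴) : Multiset 𝒴)

/-- The one-message shuffled mechanism `Π_R`: the random multiset `{R(x_1), …, R(x_n)}`. -/
noncomputable def shuffle1 {𝒳 : Type u} {𝒴 : Type v} (n : ℕ) (R : 𝒳 → PMF 𝒴)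
    (x : Fin n → 𝒳) : PMF (Multiset 𝒴) :=
  (indep n fun i => R (x i)).map fun l => (l : Multiset 𝒴)

/-- `(ε, δ)`-differential privacy of a local randomizer (any two inputs are neighbors). -/
def RandDP {𝒳 : Type u} {𝒴 : Type v} (R : 𝒳 → PMF 𝒴) (ε δ : ℝ) : Prop :=
  ∀ x x' : 𝒳, ∀ T : Set 𝒴,
    (R x).toOuterMeasure T ≤
      ENNReal.ofReal (Real.exp ε) * (R x').toOuterMeasure T + ENNReal.ofReal δ

/-- The output of the local protocol `(R, A)`. -/
noncomputable def localOut {𝒳 : Type u} {𝒴 : Type v} {𝒵 : Type w} (n : ℕ)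
    (R : 𝒳 → PMF 𝒴) (A : List 𝒴 → 𝒵) (X : Fin n → 𝒳) : PMF 𝒵 :=
  (indep n fun i => R (X i)).map A

/-- `(a, b)`-accuracy of a protocol `P` for a function `f` w.r.t. a distance `d`. -/
def AccFor {I : Type u} {𝒵 : Type w} (P : I → PMF 𝒵) (f : I → 𝒵) (d : 𝒵 → 𝒵 → ℝ)
    (a b : ℝ) : Prop :=
  ∀ X, ENNReal.ofReal (1 - b) ≤ (P X).toOuterMeasure {z | d z (f X) ≤ a}



/-! ### Auxiliary machinery for Statement 16 -/

section Stmt16Aux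

lemma om_le_one {𝒴 : Type v} (p : PMF 𝒴) (s : Set 𝒴) : p.toOuterMeasure s ≤ 1 := by
  rw [PMF.toOuterMeasure_apply, ← p.tsum_coe]
  exact Summable.tsum_le_tsum (fun x => Set.indicator_le_self _ _ x) ENNReal.summable ENNReal.summable

lemma half_trick {a dd : ℝ≥0∞} (ha : a ≤ 1) (h : a ≤ 2⁻¹ * a + dd) : a ≤ 2 * dd := by
  have hfin : 2⁻¹ * a ≠ ⊤ :=
    ENNReal.mul_ne_top (by norm_num) (lt_of_le_of_lt ha ENNReal.one_lt_top).ne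
  have h2 : 2⁻¹ * a + 2⁻¹ * a = a := by
    rw [← add_mul, ENNReal.inv_two_add_inv_two, one_mul]
  have h3 : 2⁻¹ * a + 2⁻¹ * a ≤ 2⁻¹ * a + dd := h2.le.trans h
  have h4 : 2⁻¹ * a ≤ dd := (ENNReal.add_le_add_iff_left hfin).mp h3
  calc a = 2 * (2⁻¹ * a) := by
        rw [← mul_assoc, ENNReal.mul_inv_cancel two_ne_zero ENNReal.ofNat_ne_top, one_mul]
  _ ≤ 2 * dd := mul_le_mul_right h4 2

/-- clamp density of `p` into the band `[c⁻¹ ⬝ W, c ⬝ W]` -/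
noncomputable def cl {𝒴 : Type v} (c : ℝ≥0∞) (W p : PMF 𝒴) (y : 𝒴) : ℝ≥0∞ :=
  max (min (p y) (c * W y)) (c⁻¹ * W y)

variable {𝒴 : Type v} {c : ℝ≥0∞} {W p : PMF 𝒴}

lemma cl_le_cap (hc1 : 1 ≤ c) (y : 𝒴) : cl c W p y ≤ c * W y :=
  max_le (min_le_right _ _)
    (mul_le_mul_left ((ENNReal.inv_le_one.mpr hc1).trans hc1) _)

lemma inv_cap_le_cl (y : 𝒴) : c⁻¹ * W y ≤ cl c W p y := le_max_right _ _

lemma p_le_cl_add (y : 𝒴) : p y ≤ cl c W p y + (p y - c * W y) := by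
  rcases le_total (p y) (c * W y) with h | h
  · have h0 : p y - c * W y = 0 := tsub_eq_zero_of_le h
    rw [h0, add_zero]
    exact le_trans (min_eq_left h).symm.le (le_max_left _ _)
  · calc p y = c * W y + (p y - c * W y) := (add_tsub_cancel_of_le h).symm
    _ ≤ _ := add_le_add_left (le_trans (min_eq_right h).symm.le (le_max_left _ _)) _

lemma cl_le_add (y : 𝒴) : cl c W p y ≤ p y + (c⁻¹ * W y - p y) := by
  apply max_le
  · exact le_add_right (min_le_left _ _)
  · rcases le_total (c⁻¹ * W y) (p y) with h | h
    · exact le_add_right h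
    · exact le_of_eq (add_tsub_cancel_of_le h).symm

lemma cl_tsum_le (hc1 : 1 ≤ c) : ∑' y, cl c W p y ≤ c := by
  calc ∑' y, cl c W p y ≤ ∑' y, c * W y :=
        Summable.tsum_le_tsum (cl_le_cap hc1) ENNReal.summable ENNReal.summable
  _ = c := by rw [ENNReal.tsum_mul_left, W.tsum_coe, mul_one]

lemma le_cl_tsum : c⁻¹ ≤ ∑' y, cl c W p y := by
  calc c⁻¹ = ∑' y, c⁻¹ * W y := by rw [ENNReal.tsum_mul_left, W.tsum_coe, mul_one]
  _ ≤ _ := Summable.tsum_le_tsum (fun y => inv_cap_le_cl y) ENNReal.summable ENNReal.summable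

lemma cl_tsum_ne_zero (hct : c ≠ ⊤) : (∑' y, cl c W p y) ≠ 0 :=
  fun h => (ENNReal.inv_ne_zero.mpr hct) (le_antisymm (h ▸ le_cl_tsum) (zero_le))

lemma cl_tsum_ne_top (hc1 : 1 ≤ c) (hct : c ≠ ⊤) : (∑' y, cl c W p y) ≠ ⊤ :=
  ((cl_tsum_le hc1).trans_lt (lt_top_iff_ne_top.mpr hct)).ne

/-- the normalized clamped PMF -/
noncomputable def clP (c : ℝ≥0∞) (hc1 : 1 ≤ c) (hct : c ≠ ⊤) (W p : PMF 𝒴) : PMF 𝒴 :=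
  ⟨fun y => cl c W p y * (∑' z, cl c W p z)⁻¹, by
    rw [ENNReal.summable.hasSum_iff, ENNReal.tsum_mul_right]
    exact ENNReal.mul_inv_cancel (cl_tsum_ne_zero hct) (cl_tsum_ne_top hc1 hct)⟩

lemma clP_apply (hc1 : 1 ≤ c) (hct : c ≠ ⊤) (y : 𝒴) :
    clP c hc1 hct W p y = cl c W p y * (∑' z, cl c W p z)⁻¹ := rfl

lemma clP_mul (hc1 : 1 ≤ c) (hct : c ≠ ⊤) (y : 𝒴) :
    clP c hc1 hct W p y * (∑' z, cl c W p z) = cl c W p y := by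
  rw [clP_apply, mul_assoc,
    ENNReal.inv_mul_cancel (cl_tsum_ne_zero hct) (cl_tsum_ne_top hc1 hct), mul_one]

lemma cut_mass_le {E dd : ℝ≥0∞} (hE : E * c⁻¹ ≤ 2⁻¹) (hc0 : c ≠ 0) (hct : c ≠ ⊤)
    (hdp : ∀ T : Set 𝒴, p.toOuterMeasure T ≤ E * W.toOuterMeasure T + dd) :
    ∑' y, (p y - c * W y) ≤ 2 * dd := by
  set S : Set 𝒴 := {y | c * W y < p y} with hS
  have h1 : ∑' y, (p y - c * W y) ≤ p.toOuterMeasure S := by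
    rw [PMF.toOuterMeasure_apply]
    refine Summable.tsum_le_tsum (fun y => ?_) ENNReal.summable ENNReal.summable
    by_cases hy : y ∈ S
    · rw [Set.indicator_of_mem hy]; exact tsub_le_self
    · rw [Set.indicator_of_notMem hy]
      have h : p y ≤ c * W y := not_lt.mp hy
      simp [tsub_eq_zero_of_le h]
  have h2 : W.toOuterMeasure S ≤ c⁻¹ * p.toOuterMeasure S := by
    rw [PMF.toOuterMeasure_apply, PMF.toOuterMeasure_apply, ← ENNReal.tsum_mul_left]
    refine Summable.tsum_le_tsum (fun y => ?_) ENNReal.summable ENNReal.summable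
    by_cases hy : y ∈ S
    · rw [Set.indicator_of_mem hy, Set.indicator_of_mem hy]
      calc W y = c⁻¹ * (c * W y) := by
            rw [← mul_assoc, ENNReal.inv_mul_cancel hc0 hct, one_mul]
      _ ≤ c⁻¹ * p y := mul_le_mul_right (le_of_lt hy) _
    · simp [Set.indicator_of_notMem hy]
  have h3 : p.toOuterMeasure S ≤ 2⁻¹ * p.toOuterMeasure S + dd := by
    calc p.toOuterMeasure S ≤ E * W.toOuterMeasure S + dd := hdp S
    _ ≤ E * (c⁻¹ * p.toOuterMeasure S) + dd := add_le_add_left (mul_le_mul_right h2 E) dd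
    _ = (E * c⁻¹) * p.toOuterMeasure S + dd := by rw [mul_assoc]
    _ ≤ 2⁻¹ * p.toOuterMeasure S + dd := add_le_add_left (mul_le_mul_left hE _) dd
  exact h1.trans (half_trick (om_le_one _ _) h3)

lemma raise_mass_le {E dd : ℝ≥0∞} (hE : E * c⁻¹ ≤ 2⁻¹) (hc1 : 1 ≤ c)
    (hdp : ∀ T : Set 𝒴, W.toOuterMeasure T ≤ E * p.toOuterMeasure T + dd) :
    ∑' y, (c⁻¹ * W y - p y) ≤ 2 * dd := by
  set S : Set 𝒴 := {y | p y < c⁻¹ * W y} with hS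
  have h1 : ∑' y, (c⁻¹ * W y - p y) ≤ W.toOuterMeasure S := by
    rw [PMF.toOuterMeasure_apply]
    refine Summable.tsum_le_tsum (fun y => ?_) ENNReal.summable ENNReal.summable
    by_cases hy : y ∈ S
    · rw [Set.indicator_of_mem hy]
      calc c⁻¹ * W y - p y ≤ c⁻¹ * W y := tsub_le_self
      _ ≤ 1 * W y := mul_le_mul_left (ENNReal.inv_le_one.mpr hc1) _
      _ = W y := one_mul _
    · rw [Set.indicator_of_notMem hy]
      have h : c⁻¹ * W y ≤ p y := not_lt.mp hy
      simp [tsub_eq_zero_of_le h]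
  have h2 : p.toOuterMeasure S ≤ c⁻¹ * W.toOuterMeasure S := by
    rw [PMF.toOuterMeasure_apply, PMF.toOuterMeasure_apply, ← ENNReal.tsum_mul_left]
    refine Summable.tsum_le_tsum (fun y => ?_) ENNReal.summable ENNReal.summable
    by_cases hy : y ∈ S
    · rw [Set.indicator_of_mem hy, Set.indicator_of_mem hy]
      exact le_of_lt hy
    · simp [Set.indicator_of_notMem hy]
  have h3 : W.toOuterMeasure S ≤ 2⁻¹ * W.toOuterMeasure S + dd := by
    calc W.toOuterMeasure S ≤ E * p.toOuterMeasure S + dd := hdp S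
    _ ≤ E * (c⁻¹ * W.toOuterMeasure S) + dd := add_le_add_left (mul_le_mul_right h2 E) dd
    _ = (E * c⁻¹) * W.toOuterMeasure S + dd := by rw [mul_assoc]
    _ ≤ 2⁻¹ * W.toOuterMeasure S + dd := add_le_add_left (mul_le_mul_left hE _) dd
  exact h1.trans (half_trick (om_le_one _ _) h3)

lemma indep_succ {α : Type u} (n : ℕ) (p : Fin (n+1) → PMF α) :
    indep (n+1) p = (p 0).bind fun y => (indep n fun i => p i.succ).map (y :: ·) := by
  show ((p 0).bind fun y => (indep n fun i => p i.succ).bind fun ys => PMF.pure (y :: ys)) = _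
  congr 1

lemma indep_bound {α : Type u} :
    ∀ (n : ℕ) (p q : Fin n → PMF α) (b : Fin n → α → ℝ≥0∞) (K cst : ℝ≥0∞), 1 ≤ K →
    (∀ i y, p i y ≤ K * q i y + b i y) → (∀ i, ∑' y, b i y ≤ cst) →
    ∀ T : Set (List α),
      (indep n p).toOuterMeasure T ≤
        K ^ n * (indep n q).toOuterMeasure T + (n : ℝ≥0∞) * cst * K ^ n := by
  intro n
  induction n with
  | zero =>
    intro p q b K cst hK hpt hb T
    show (indep 0 p).toOuterMeasure T ≤ _
    have h1 : indep 0 p = PMF.pure ([] : List α) := rfl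
    have h2 : indep 0 q = PMF.pure ([] : List α) := rfl
    rw [h1, h2]
    simp
  | succ n ih =>
    intro p q b K cst hK hpt hb T
    have hrec := ih (fun i => p i.succ) (fun i => q i.succ) (fun i => b i.succ) K cst hK
      (fun i y => hpt i.succ y) (fun i => hb i.succ)
    rw [indep_succ n p, indep_succ n q, PMF.toOuterMeasure_bind_apply,
      PMF.toOuterMeasure_bind_apply]
    simp only [PMF.toOuterMeasure_map_apply]
    set Qy : α → ℝ≥0∞ := fun y => (indep n fun i => q i.succ).toOuterMeasure ((y :: ·) ⁻¹' T)
      with hQy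
    have hQy1 : ∀ y, Qy y ≤ 1 := fun y => om_le_one _ _
    have step1 : ∑' y, p 0 y * (indep n fun i => p i.succ).toOuterMeasure ((y :: ·) ⁻¹' T) ≤
        ∑' y, p 0 y * (K ^ n * Qy y + (n : ℝ≥0∞) * cst * K ^ n) := by
      refine Summable.tsum_le_tsum (fun y => mul_le_mul_right ?_ _) ENNReal.summable ENNReal.summable
      exact hrec _
    have step2 : ∑' y, p 0 y * (K ^ n * Qy y + (n : ℝ≥0∞) * cst * K ^ n) =
        K ^ n * (∑' y, p 0 y * Qy y) + (n : ℝ≥0∞) * cst * K ^ n := by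
      calc ∑' y, p 0 y * (K ^ n * Qy y + (n : ℝ≥0∞) * cst * K ^ n)
          = ∑' y, (K ^ n * (p 0 y * Qy y) + p 0 y * ((n : ℝ≥0∞) * cst * K ^ n)) := by
            congr 1; funext y; ring
      _ = K ^ n * (∑' y, p 0 y * Qy y) + (∑' y, p 0 y) * ((n : ℝ≥0∞) * cst * K ^ n) := by
            rw [ENNReal.tsum_add, ENNReal.tsum_mul_left, ENNReal.tsum_mul_right]
      _ = _ := by rw [(p 0).tsum_coe, one_mul]
    have step3 : ∑' y, p 0 y * Qy y ≤ K * (∑' y, q 0 y * Qy y) + cst := by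
      calc ∑' y, p 0 y * Qy y ≤ ∑' y, (K * q 0 y + b 0 y) * Qy y :=
            Summable.tsum_le_tsum (fun y => mul_le_mul_left (hpt 0 y) _) ENNReal.summable
              ENNReal.summable
      _ = K * (∑' y, q 0 y * Qy y) + ∑' y, b 0 y * Qy y := by
            calc ∑' y, (K * q 0 y + b 0 y) * Qy y
                = ∑' y, (K * (q 0 y * Qy y) + b 0 y * Qy y) := by congr 1; funext y; ring
            _ = _ := by rw [ENNReal.tsum_add, ENNReal.tsum_mul_left]
      _ ≤ K * (∑' y, q 0 y * Qy y) + ∑' y, b 0 y := by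
            refine add_le_add_right (Summable.tsum_le_tsum (fun y => ?_) ENNReal.summable
              ENNReal.summable) _
            calc b 0 y * Qy y ≤ b 0 y * 1 := mul_le_mul_right (hQy1 y) _
            _ = b 0 y := mul_one _
      _ ≤ K * (∑' y, q 0 y * Qy y) + cst := add_le_add_right (hb 0) _
    calc ∑' y, p 0 y * (indep n fun i => p i.succ).toOuterMeasure ((y :: ·) ⁻¹' T)
        ≤ K ^ n * (∑' y, p 0 y * Qy y) + (n : ℝ≥0∞) * cst * K ^ n := step1.trans step2.le
    _ ≤ K ^ n * (K * (∑' y, q 0 y * Qy y) + cst) + (n : ℝ≥0∞) * cst * K ^ n :=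
        add_le_add_left (mul_le_mul_right step3 _) _
    _ = K ^ (n+1) * (∑' y, q 0 y * Qy y) + ((n : ℝ≥0∞) + 1) * cst * K ^ n := by ring
    _ ≤ K ^ (n+1) * (∑' y, q 0 y * Qy y) + ((n : ℝ≥0∞) + 1) * cst * K ^ (n+1) := by
        refine add_le_add_right (mul_le_mul_right ?_ _) _
        exact pow_le_pow_right₀ hK (Nat.le_succ n)
    _ = K ^ (n+1) * (∑' y, q 0 y * Qy y) + ((n+1 : ℕ) : ℝ≥0∞) * cst * K ^ (n+1) := by
        push_cast; ring

lemma pow_one_add_le {t : ℝ} (ht : 0 ≤ t) :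
    ∀ n : ℕ, (n : ℝ) * t ≤ 1/2 → (1+t)^n ≤ 1 + 2*(n:ℝ)*t := by
  intro n
  induction n with
  | zero => intro _; norm_num
  | succ n ih =>
    intro h
    have hcast : (n : ℝ) ≤ ((n+1 : ℕ) : ℝ) := by push_cast; linarith
    have hn : (n : ℝ) * t ≤ 1/2 := le_trans (mul_le_mul_of_nonneg_right hcast ht) h
    have ihn := ih hn
    have h1t : (0:ℝ) ≤ 1 + t := by linarith
    have hexp : (1+t)^(n+1) = (1+t)^n * (1+t) := by ring
    rw [hexp]
    have h2 : (1+t)^n * (1+t) ≤ (1 + 2*(n:ℝ)*t) * (1+t) := mul_le_mul_of_nonneg_right ihn h1t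
    refine h2.trans ?_
    push_cast
    nlinarith [hn, ht, mul_nonneg ht ht]

end Stmt16Aux

/-- extension of Bun–Nelson–Stemmer: if `R` is `(ε,δ)`-DP with
`ε > 2/3` and `δ < (β/(8n ln(n/β))) e^{-6ε}`, and the local protocol `(R, A)` is
`(α,β)`-accurate for `f` w.r.t. `d`, then there is a local randomizer `R'` that is
`(8ε,0)`-DP such that `(R', A)` is `(α,4β)`-accurate for `f` w.r.t. `d`. -/
theorem stmt16 {𝒳 : Type u} {𝒴 : Type v} {𝒵 : Type w} (n : ℕ) (R : 𝒳 → PMF 𝒴)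
    (eps del beta : ℝ) (hbeta : beta ∈ Set.Ioo (0 : ℝ) 1) (heps : 2 / 3 < eps)
    (hdel : del < beta / (8 * n * Real.log (n / beta)) * Real.exp (-(6 * eps)))
    (hRdp : RandDP R eps del)
    (A : List 𝒴 → 𝒵) (f : (Fin n → 𝒳) → 𝒵) (d : 𝒵 → 𝒵 → ℝ) (alpha : ℝ)
    (hacc : AccFor (localOut n R A) f d alpha beta) :
    ∃ R' : 𝒳 → PMF 𝒴,
      RandDP R' (8 * eps) 0 ∧ AccFor (localOut n R' A) f d alpha (4 * beta) := by
  rcases le_or_gt del 0 with hdel0 | hdel0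
  · -- `del ≤ 0`: `R` itself is `(eps,0)`-DP, hence `(8 eps, 0)`-DP
    refine ⟨R, fun x x' T => ?_, fun X => ?_⟩
    · refine (hRdp x x' T).trans ?_
      rw [ENNReal.ofReal_eq_zero.mpr hdel0, ENNReal.ofReal_zero, add_zero, add_zero]
      exact mul_le_mul_left (ENNReal.ofReal_le_ofReal (Real.exp_le_exp.mpr (by linarith))) _
    · exact le_trans (ENNReal.ofReal_le_ofReal (by linarith [hbeta.1])) (hacc X)
  · -- `0 < del`
    have hn1 : 1 ≤ n := by
      rcases Nat.eq_zero_or_pos n with h0 | h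
      · subst h0
        norm_num [Real.log_zero] at hdel
        linarith
      · exact h
    cases isEmpty_or_nonempty 𝒳 with
    | inl hemp =>
      exact ⟨R, fun x => (IsEmpty.false x).elim, fun X => ((IsEmpty.false (X ⟨0, hn1⟩)).elim)⟩
    | inr hne =>
      obtain ⟨x₀⟩ := hne
      rcases le_or_gt (1/4 : ℝ) beta with hb4 | hb4
      · -- trivial accuracy case
        obtain ⟨y₀, _⟩ := (R x₀).support_nonempty
        refine ⟨fun _ => PMF.pure y₀, fun x x' T => ?_, fun X => ?_⟩
        · have h1 : (1:ℝ≥0∞) ≤ ENNReal.ofReal (Real.exp (8*eps)) := by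
            rw [ENNReal.one_le_ofReal]
            exact Real.one_le_exp (by linarith)
          calc (PMF.pure y₀).toOuterMeasure T
              = 1 * (PMF.pure y₀).toOuterMeasure T := (one_mul _).symm
          _ ≤ ENNReal.ofReal (Real.exp (8*eps)) * (PMF.pure y₀).toOuterMeasure T :=
              mul_le_mul_left h1 _
          _ ≤ _ + ENNReal.ofReal 0 := le_add_right le_rfl
        · rw [ENNReal.ofReal_eq_zero.mpr (by linarith : 1 - 4*beta ≤ 0)]
          exact zero_le
      · -- main case : `beta < 1/4`
        have heps0 : (0:ℝ) < eps := by linarith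
        have hb0 : (0:ℝ) < beta := hbeta.1
        have hnR : (1:ℝ) ≤ (n:ℝ) := by exact_mod_cast hn1
        have hL : 1 ≤ Real.log ((n:ℝ)/beta) := by
          rw [Real.le_log_iff_exp_le (by positivity)]
          have h4 : (4:ℝ) ≤ (n:ℝ)/beta := by
            rw [le_div_iff₀ hb0]; nlinarith
          linarith [Real.exp_one_lt_d9]
        have hE6 : Real.exp (-(6*eps)) ≤ 1 := Real.exp_le_one_iff.mpr (by linarith)
        have hdb : del ≤ beta/(8*(n:ℝ)) := by
          have h1 : del ≤ beta / (8*(n:ℝ)*Real.log ((n:ℝ)/beta)) := by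
            calc del ≤ beta / (8*(n:ℝ)*Real.log ((n:ℝ)/beta)) * Real.exp (-(6*eps)) := hdel.le
            _ ≤ beta / (8*(n:ℝ)*Real.log ((n:ℝ)/beta)) * 1 :=
                mul_le_mul_of_nonneg_left hE6 (by positivity)
            _ = _ := mul_one _
          refine h1.trans ?_
          have h2 : (8*(n:ℝ)) ≤ 8*(n:ℝ)*Real.log ((n:ℝ)/beta) := by nlinarith
          exact div_le_div_of_nonneg_left hb0.le (by positivity) h2
        have hnne : (n:ℝ) ≠ 0 := by positivity
        have hnd : (n:ℝ)*del ≤ beta/8 := by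
          calc (n:ℝ)*del ≤ (n:ℝ)*(beta/(8*(n:ℝ))) :=
              mul_le_mul_of_nonneg_left hdb (by positivity)
          _ = beta/8 := by field_simp
        have hd32 : del ≤ 1/32 := by
          nlinarith [mul_nonneg (by linarith : (0:ℝ) ≤ (n:ℝ)-1) hdel0.le]
        -- the constants
        set c : ℝ≥0∞ := ENNReal.ofReal (Real.exp (3*eps)) with hc
        have hc1 : 1 ≤ c := by
          rw [hc, ENNReal.one_le_ofReal]
          exact Real.one_le_exp (by positivity)
        have hct : c ≠ ⊤ := ENNReal.ofReal_ne_top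
        have hc0 : c ≠ 0 := by
          intro h
          rw [h] at hc1
          exact (by norm_num : ¬ ((1:ℝ≥0∞) ≤ 0)) hc1
        have hcinv : c⁻¹ = ENNReal.ofReal (Real.exp (-(3*eps))) := by
          rw [hc, ← ENNReal.ofReal_inv_of_pos (Real.exp_pos _), ← Real.exp_neg]
        have h2exp : (2:ℝ) ≤ Real.exp (2*eps) := by
          nlinarith [Real.add_one_lt_exp (show (2*eps) ≠ 0 from (by positivity : (0:ℝ) < 2*eps).ne')]
        have hEc : ENNReal.ofReal (Real.exp eps) * c⁻¹ ≤ 2⁻¹ := by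
          rw [hcinv, ← ENNReal.ofReal_mul (Real.exp_nonneg _), ← Real.exp_add]
          have hle : Real.exp (eps + -(3*eps)) ≤ 1/2 := by
            rw [show eps + -(3*eps) = -(2*eps) by ring, Real.exp_neg]
            rw [inv_le_comm₀ (Real.exp_pos _) (by norm_num : (0:ℝ) < 1/2)]
            calc (1/2 : ℝ)⁻¹ = 2 := by norm_num
            _ ≤ Real.exp (2*eps) := h2exp
          calc ENNReal.ofReal (Real.exp (eps + -(3*eps))) ≤ ENNReal.ofReal (1/2) :=
            ENNReal.ofReal_le_ofReal hle
          _ = 2⁻¹ := by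
            rw [one_div, ENNReal.ofReal_inv_of_pos (by norm_num : (0:ℝ) < 2)]
            norm_num
        set dd := ENNReal.ofReal del with hdd
        -- mass bounds
        have hcut : ∀ x, ∑' y, (R x y - c * R x₀ y) ≤ 2 * dd := fun x =>
          cut_mass_le hEc hc0 hct (fun T => hRdp x x₀ T)
        have hraise : ∀ x, ∑' y, (c⁻¹ * R x₀ y - R x y) ≤ 2 * dd := fun x =>
          raise_mass_le hEc hc1 (fun T => hRdp x₀ x T)
        have hm_le : ∀ x, (∑' y, cl c (R x₀) (R x) y) ≤ 1 + 2*dd := by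
          intro x
          calc (∑' y, cl c (R x₀) (R x) y) ≤ ∑' y, (R x y + (c⁻¹ * R x₀ y - R x y)) :=
            Summable.tsum_le_tsum (fun y => cl_le_add y) ENNReal.summable ENNReal.summable
          _ = 1 + ∑' y, (c⁻¹ * R x₀ y - R x y) := by rw [ENNReal.tsum_add, (R x).tsum_coe]
          _ ≤ 1 + 2*dd := add_le_add_right (hraise x) _
        have hm_ge : ∀ x, 1 ≤ (∑' y, cl c (R x₀) (R x) y) + 2*dd := by
          intro x
          calc (1:ℝ≥0∞) = ∑' y, R x y := (R x).tsum_coe.symm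
          _ ≤ ∑' y, (cl c (R x₀) (R x) y + (R x y - c * R x₀ y)) :=
            Summable.tsum_le_tsum (fun y => p_le_cl_add y) ENNReal.summable ENNReal.summable
          _ = (∑' y, cl c (R x₀) (R x) y) + ∑' y, (R x y - c * R x₀ y) := ENNReal.tsum_add
          _ ≤ _ + 2*dd := add_le_add_right (hcut x) _
        have e2 : (1:ℝ≥0∞) + 2*dd = ENNReal.ofReal (1 + 2*del) := by
          rw [ENNReal.ofReal_add (by norm_num) (by positivity), ENNReal.ofReal_one,
            ENNReal.ofReal_mul (by norm_num), ENNReal.ofReal_ofNat, hdd]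
        have hdkey : ∀ x, 1 + 2*dd ≤ 2 * (∑' y, cl c (R x₀) (R x) y) := by
          intro x
          have h1 : (2:ℝ≥0∞) ≤ 2 * (∑' y, cl c (R x₀) (R x) y) + 4*dd := by
            calc (2:ℝ≥0∞) = 2 * 1 := (mul_one 2).symm
            _ ≤ 2 * ((∑' y, cl c (R x₀) (R x) y) + 2*dd) := mul_le_mul_right (hm_ge x) 2
            _ = 2 * (∑' y, cl c (R x₀) (R x) y) + 4*dd := by ring
          have h2 : (2:ℝ≥0∞) - 4*dd ≤ 2 * (∑' y, cl c (R x₀) (R x) y) :=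
            tsub_le_iff_right.mpr h1
          refine le_trans ?_ h2
          have e1 : (4:ℝ≥0∞)*dd = ENNReal.ofReal (4*del) := by
            rw [ENNReal.ofReal_mul (by norm_num), ENNReal.ofReal_ofNat, hdd]
          have e3 : (2:ℝ≥0∞) - 4*dd = ENNReal.ofReal (2 - 4*del) := by
            rw [ENNReal.ofReal_sub _ (by positivity), e1, ENNReal.ofReal_ofNat]
          rw [e2, e3]
          exact ENNReal.ofReal_le_ofReal (by linarith)
        -- the new randomizer
        set R' : 𝒳 → PMF 𝒴 := fun x => clP c hc1 hct (R x₀) (R x) with hR'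
        have hccc : (c * c) * c⁻¹ = c := by
          rw [mul_assoc, ENNReal.mul_inv_cancel hc0 hct, mul_one]
        have h2E : (2:ℝ≥0∞) ≤ ENNReal.ofReal (Real.exp (2*eps)) := by
          calc (2:ℝ≥0∞) = ENNReal.ofReal 2 := (ENNReal.ofReal_ofNat 2).symm
          _ ≤ _ := ENNReal.ofReal_le_ofReal h2exp
        have h2c : (2:ℝ≥0∞) * (c * c) ≤ ENNReal.ofReal (Real.exp (8*eps)) := by
          have hcc : c * c = ENNReal.ofReal (Real.exp (6*eps)) := by
            rw [hc, ← ENNReal.ofReal_mul (Real.exp_nonneg _), ← Real.exp_add,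
              show 3*eps+3*eps = 6*eps by ring]
          have h8 : ENNReal.ofReal (Real.exp (2*eps)) * ENNReal.ofReal (Real.exp (6*eps)) =
              ENNReal.ofReal (Real.exp (8*eps)) := by
            rw [← ENNReal.ofReal_mul (Real.exp_nonneg _), ← Real.exp_add,
              show 2*eps+6*eps = 8*eps by ring]
          rw [hcc, ← h8]
          exact mul_le_mul_left h2E _
        have hDPpt : ∀ x x' y, R' x y ≤ ENNReal.ofReal (Real.exp (8*eps)) * R' x' y := by
          intro x x' y
          calc R' x y = cl c (R x₀) (R x) y * (∑' z, cl c (R x₀) (R x) z)⁻¹ := rfl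
          _ ≤ (c * R x₀ y) * (∑' z, cl c (R x₀) (R x) z)⁻¹ :=
              mul_le_mul_left (cl_le_cap hc1 y) _
          _ = ((c*c) * (c⁻¹ * R x₀ y)) * (∑' z, cl c (R x₀) (R x) z)⁻¹ := by
              rw [← mul_assoc (c*c), hccc]
          _ ≤ ((c*c) * cl c (R x₀) (R x') y) * (∑' z, cl c (R x₀) (R x) z)⁻¹ :=
              mul_le_mul_left (mul_le_mul_right (inv_cap_le_cl y) _) _
          _ = ((c*c) * (R' x' y * (∑' z, cl c (R x₀) (R x') z))) *
                (∑' z, cl c (R x₀) (R x) z)⁻¹ := by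
              rw [clP_mul hc1 hct]
          _ ≤ ((c*c) * (R' x' y * (1 + 2*dd))) * (∑' z, cl c (R x₀) (R x) z)⁻¹ := by
              refine mul_le_mul_left (mul_le_mul_right (mul_le_mul_right ?_ _) _) _
              exact hm_le x'
          _ ≤ ((c*c) * (R' x' y * (2 * (∑' z, cl c (R x₀) (R x) z)))) *
                (∑' z, cl c (R x₀) (R x) z)⁻¹ := by
              refine mul_le_mul_left (mul_le_mul_right (mul_le_mul_right ?_ _) _) _
              exact hdkey x
          _ = (2*(c*c)) * R' x' y *
                ((∑' z, cl c (R x₀) (R x) z) * (∑' z, cl c (R x₀) (R x) z)⁻¹) := by ring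
          _ = (2*(c*c)) * R' x' y := by
              rw [ENNReal.mul_inv_cancel (cl_tsum_ne_zero hct) (cl_tsum_ne_top hc1 hct), mul_one]
          _ ≤ ENNReal.ofReal (Real.exp (8*eps)) * R' x' y := mul_le_mul_left h2c _
        have hDP : RandDP R' (8*eps) 0 := by
          intro x x' T
          rw [ENNReal.ofReal_zero, add_zero, PMF.toOuterMeasure_apply, PMF.toOuterMeasure_apply,
            ← ENNReal.tsum_mul_left]
          refine Summable.tsum_le_tsum (fun y => ?_) ENNReal.summable ENNReal.summable
          by_cases hy : y ∈ T
          · rw [Set.indicator_of_mem hy, Set.indicator_of_mem hy]; exact hDPpt x x' y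
          · rw [Set.indicator_of_notMem hy, Set.indicator_of_notMem hy, mul_zero]
        have hpt : ∀ x y, R x y ≤ (1 + 2*dd) * R' x y + (R x y - c * R x₀ y) := by
          intro x y
          refine (p_le_cl_add y).trans (add_le_add_left ?_ _)
          calc cl c (R x₀) (R x) y
              = R' x y * (∑' z, cl c (R x₀) (R x) z) := (clP_mul hc1 hct y).symm
          _ ≤ R' x y * (1 + 2*dd) := mul_le_mul_right (hm_le x) _
          _ = (1 + 2*dd) * R' x y := mul_comm _ _
        refine ⟨R', hDP, ?_⟩
        intro X
        have hPT := hacc X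
        simp only [localOut, PMF.toOuterMeasure_map_apply] at hPT ⊢
        set S : Set (List 𝒴) := A ⁻¹' {z | d z (f X) ≤ alpha} with hSdef
        have hbound := indep_bound n (fun i => R (X i)) (fun i => R' (X i))
          (fun i y => R (X i) y - c * R x₀ y) (1 + 2*dd) (2*dd)
          (le_add_right le_rfl)
          (fun i y => hpt (X i) y) (fun i => hcut (X i)) S
        have hn2d : (n:ℝ) * (2*del) ≤ 1/2 := by nlinarith
        have hKpow : (1 + 2*dd)^n ≤ ENNReal.ofReal (1 + 4*(n:ℝ)*del) := by
          rw [e2, ← ENNReal.ofReal_pow (by positivity)]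
          refine ENNReal.ofReal_le_ofReal ?_
          have h := pow_one_add_le (t := 2*del) (by positivity) n hn2d
          calc (1+2*del)^n ≤ 1 + 2*(n:ℝ)*(2*del) := h
          _ = 1 + 4*(n:ℝ)*del := by ring
        have hKle2 : (1 + 2*dd)^n ≤ 2 := by
          refine hKpow.trans ?_
          calc ENNReal.ofReal (1 + 4*(n:ℝ)*del) ≤ ENNReal.ofReal 2 :=
            ENNReal.ofReal_le_ofReal (by nlinarith)
          _ = 2 := ENNReal.ofReal_ofNat 2
        set Q := (indep n fun i => R' (X i)).toOuterMeasure S with hQdef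
        have hmain : (indep n fun i => R (X i)).toOuterMeasure S ≤
            Q + ENNReal.ofReal (8*(n:ℝ)*del) := by
          refine hbound.trans ?_
          have hA : (1+2*dd)^n * Q ≤ Q + ENNReal.ofReal (4*(n:ℝ)*del) := by
            calc (1+2*dd)^n * Q ≤ ENNReal.ofReal (1+4*(n:ℝ)*del) * Q :=
              mul_le_mul_left hKpow _
            _ = (1 + ENNReal.ofReal (4*(n:ℝ)*del)) * Q := by
                rw [ENNReal.ofReal_add (by norm_num) (by positivity), ENNReal.ofReal_one]
            _ = Q + ENNReal.ofReal (4*(n:ℝ)*del) * Q := by ring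
            _ ≤ Q + ENNReal.ofReal (4*(n:ℝ)*del) * 1 :=
                add_le_add_right (mul_le_mul_right (om_le_one _ _) _) _
            _ = Q + ENNReal.ofReal (4*(n:ℝ)*del) := by rw [mul_one]
          have hB : (n:ℝ≥0∞) * (2*dd) * (1+2*dd)^n ≤ ENNReal.ofReal (4*(n:ℝ)*del) := by
            calc (n:ℝ≥0∞) * (2*dd) * (1+2*dd)^n ≤ (n:ℝ≥0∞) * (2*dd) * 2 :=
              mul_le_mul_right hKle2 _
            _ = ENNReal.ofReal ((n:ℝ) * (2*del) * 2) := by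
                rw [ENNReal.ofReal_mul (by positivity), ENNReal.ofReal_mul (by positivity),
                  ENNReal.ofReal_natCast, ENNReal.ofReal_mul (by norm_num),
                  ENNReal.ofReal_ofNat, hdd]
            _ = ENNReal.ofReal (4*(n:ℝ)*del) := by
                rw [show (n:ℝ)*(2*del)*2 = 4*(n:ℝ)*del by ring]
          calc (1+2*dd)^n * Q + (n:ℝ≥0∞) * (2*dd) * (1+2*dd)^n
              ≤ (Q + ENNReal.ofReal (4*(n:ℝ)*del)) + ENNReal.ofReal (4*(n:ℝ)*del) :=
              add_le_add hA hB
          _ = Q + ENNReal.ofReal (8*(n:ℝ)*del) := by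
              rw [add_assoc, ← ENNReal.ofReal_add (by positivity) (by positivity),
                show 4*(n:ℝ)*del + 4*(n:ℝ)*del = 8*(n:ℝ)*del by ring]
        have hfin : ENNReal.ofReal (1-beta) ≤ Q + ENNReal.ofReal (8*(n:ℝ)*del) :=
          hPT.trans hmain
        have hsum : ENNReal.ofReal (1-4*beta) + ENNReal.ofReal (8*(n:ℝ)*del) ≤
            Q + ENNReal.ofReal (8*(n:ℝ)*del) := by
          refine le_trans ?_ hfin
          rw [← ENNReal.ofReal_add (by linarith) (by positivity)]
          exact ENNReal.ofReal_le_ofReal (by nlinarith)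
        exact (ENNReal.add_le_add_iff_right ENNReal.ofReal_ne_top).mp hsum

end ShuffledDP
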